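/- Let p > 1 be an integer, X a finite set of distinct non-negative integers, x ∈ X with x ≥ p^H, x − p^H ∉ X, and Y = X ∪ {x − p^H} \ {x}. Then for every L ≤ H, h_L(Y) − h_L(X) = −p^{H−L}, and for every L ≥ H+1, h_L(Y) − h_L(X) = |X_{x mod p^L}| − |X_{(x − p^H) mod p^L}| − δ − 1, where X_R = |{x' ∈ X : x' ≡ R (mod p^L)}|, and δ = 1 if digits H, H+1, ..., L−1 of x in base p are all zero, and δ = 0 otherwise. -/

import Mathlib

/-- The `L`-th digit of `x` in base `p`. -/
def digit (p L x : ℕ) : ℕ := x / p ^ L % p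

/-- `hL p L X` is the number of hooks of `λ(X)` with length divisible by `p^L`:
hooks of `λ(X)` correspond bijectively to pairs `(x, y)` with `x ∈ X`, `0 ≤ y < x`,
`y ∉ X`, with hook length `x - y`. -/
def hL (p L : ℕ) (X : Finset ℕ) : ℕ :=
  ∑ x ∈ X, ((Finset.range x).filter fun y => y ∉ X ∧ p ^ L ∣ x - y).card



private lemma auxA (q z : ℕ) : ((Finset.range z).filter fun y => q ∣ z - y).card = z / q := by
  rw [← Nat.Ioc_filter_dvd_card_eq_div]
  apply Finset.card_nbij' (fun y => z - y) (fun d => z - d)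
  · intro y hy
    simp only [Finset.mem_coe, Finset.mem_filter, Finset.mem_range, Finset.mem_Ioc] at *
    exact ⟨⟨by omega, by omega⟩, hy.2⟩
  · intro d hd
    simp only [Finset.mem_coe, Finset.mem_filter, Finset.mem_range, Finset.mem_Ioc] at *
    refine ⟨by omega, ?_⟩
    have h : z - (z - d) = d := by omega
    rw [h]; exact hd.2
  · intro y hy; simp only [Finset.mem_coe, Finset.mem_filter, Finset.mem_range] at hy; dsimp only; omega
  · intro d hd; simp only [Finset.mem_coe, Finset.mem_filter, Finset.mem_Ioc] at hd; dsimp only; omega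

private lemma hL_eq (p L : ℕ) (Z : Finset ℕ) :
    hL p L Z + (∑ z ∈ Z, ((Z.filter fun y => y < z ∧ y % p ^ L = z % p ^ L)).card)
      = ∑ z ∈ Z, z / p ^ L := by
  unfold hL
  rw [← Finset.sum_add_distrib]
  refine Finset.sum_congr rfl fun z hz => ?_
  have h1 : ((Finset.range z).filter fun y => y ∉ Z ∧ p ^ L ∣ z - y)
      = ((Finset.range z).filter fun y => p ^ L ∣ z - y).filter (fun y => ¬ y ∈ Z) := by
    rw [Finset.filter_filter]
    exact Finset.filter_congr fun y _ => by tauto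
  have h2 : (Z.filter fun y => y < z ∧ y % p ^ L = z % p ^ L)
      = ((Finset.range z).filter fun y => p ^ L ∣ z - y).filter (fun y => ¬ ¬ y ∈ Z) := by
    ext y
    simp only [Finset.mem_filter, Finset.mem_range, not_not]
    constructor
    · rintro ⟨hyZ, hlt, hmod⟩
      exact ⟨⟨hlt, (Nat.modEq_iff_dvd' hlt.le).mp hmod⟩, hyZ⟩
    · rintro ⟨⟨hlt, hdvd⟩, hyZ⟩
      exact ⟨hyZ, hlt, (Nat.modEq_iff_dvd' hlt.le).mpr hdvd⟩
  rw [h1, h2, Finset.card_filter_add_card_filter_not, auxA]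

private lemma symm_sum (q : ℕ) (Z : Finset ℕ) :
    ∑ z ∈ Z, ∑ y ∈ Z, (if z < y ∧ y % q = z % q then (1:ℕ) else 0)
      = ∑ z ∈ Z, ∑ y ∈ Z, (if y < z ∧ y % q = z % q then (1:ℕ) else 0) := by
  rw [Finset.sum_comm]
  refine Finset.sum_congr rfl fun z hz => Finset.sum_congr rfl fun y hy => ?_
  exact if_congr (and_congr_right fun _ => eq_comm) rfl rfl

private lemma twoT (q : ℕ) (Z : Finset ℕ) :
    2 * (∑ z ∈ Z, ((Z.filter fun y => y < z ∧ y % q = z % q)).card) + Z.card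
      = ∑ z ∈ Z, ((Z.filter fun y => y % q = z % q)).card := by
  simp only [Finset.card_filter]
  have key : ∀ z ∈ Z, ∑ y ∈ Z, (if y % q = z % q then (1:ℕ) else 0)
      = (∑ y ∈ Z, if y < z ∧ y % q = z % q then (1:ℕ) else 0)
        + (∑ y ∈ Z, if z < y ∧ y % q = z % q then (1:ℕ) else 0) + 1 := by
    intro z hz
    have pt : ∀ y : ℕ, (if y % q = z % q then (1:ℕ) else 0)
        = (if y < z ∧ y % q = z % q then (1:ℕ) else 0)
          + (if z < y ∧ y % q = z % q then (1:ℕ) else 0) + (if y = z then 1 else 0) := by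
      intro y
      rcases lt_trichotomy y z with h|h|h
      · by_cases hm : y % q = z % q <;> simp [h, hm, Nat.lt_asymm h, Nat.ne_of_lt h]
      · subst h; simp [lt_irrefl]
      · by_cases hm : y % q = z % q <;> simp [h, hm, Nat.lt_asymm h, (Nat.ne_of_lt h).symm]
    rw [Finset.sum_congr rfl fun y _ => pt y, Finset.sum_add_distrib,
      Finset.sum_add_distrib, Finset.sum_ite_eq' Z z (fun _ => (1:ℕ)), if_pos hz]
  rw [Finset.sum_congr rfl key]
  rw [Finset.sum_add_distrib, Finset.sum_add_distrib, symm_sum, Finset.sum_const,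
    smul_eq_mul, mul_one]
  ring

private lemma fiber (q : ℕ) (hq : 0 < q) (Z : Finset ℕ) :
    ∑ z ∈ Z, ((Z.filter fun y => y % q = z % q)).card
      = ∑ R ∈ Finset.range q, ((Z.filter fun y => y % q = R)).card ^ 2 := by
  rw [← Finset.sum_fiberwise_of_maps_to (g := fun z => z % q) (t := Finset.range q)
    (fun z _ => Finset.mem_range.mpr (Nat.mod_lt _ hq))
    (fun z => ((Z.filter fun y => y % q = z % q)).card)]
  refine Finset.sum_congr rfl fun R hR => ?_
  have h : ∀ z ∈ Z.filter (fun z => z % q = R),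
      ((Z.filter fun y => y % q = z % q)).card = ((Z.filter fun y => y % q = R)).card := by
    intro z hz; rw [(Finset.mem_filter.mp hz).2]
  rw [Finset.sum_congr rfl h, Finset.sum_const, smul_eq_mul, sq]
private lemma cntY (q : ℕ) (X : Finset ℕ) (x x' : ℕ) (hx : x ∈ X) (hx' : x' ∉ X) (R : ℕ) :
    (((insert x' (X.erase x)).filter fun z => z % q = R).card : ℤ)
      = ((X.filter fun z => z % q = R).card : ℤ)
        + (if x' % q = R then 1 else 0) - (if x % q = R then 1 else 0) := by
  rw [Finset.filter_insert, Finset.filter_erase]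
  have hxe : x' ∉ (X.filter fun z => z % q = R).erase x :=
    fun h => hx' (Finset.mem_filter.mp (Finset.mem_of_mem_erase h)).1
  by_cases ha : x % q = R
  · have hmem : x ∈ X.filter fun z => z % q = R := Finset.mem_filter.mpr ⟨hx, ha⟩
    have h1 : 1 ≤ (X.filter fun z => z % q = R).card := Finset.card_pos.mpr ⟨x, hmem⟩
    by_cases hb : x' % q = R
    · rw [if_pos hb, Finset.card_insert_of_notMem hxe, Finset.card_erase_of_mem hmem,
        if_pos hb, if_pos ha]
      push_cast [h1]; ring
    · rw [if_neg hb, Finset.card_erase_of_mem hmem, if_neg hb, if_pos ha]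
      push_cast [h1]; ring
  · have hne : (X.filter fun z => z % q = R).erase x = X.filter fun z => z % q = R :=
      Finset.erase_eq_of_notMem (fun h => ha (Finset.mem_filter.mp h).2)
    by_cases hb : x' % q = R
    · rw [if_pos hb, hne, Finset.card_insert_of_notMem
        (fun h => hx' (Finset.mem_filter.mp h).1), if_pos hb, if_neg ha]
      push_cast
      omega
    · rw [if_neg hb, hne, if_neg hb, if_neg ha]
      ring

private lemma master (p L : ℕ) (hp : 0 < p) (X : Finset ℕ) (x x' : ℕ)
    (hx : x ∈ X) (hx' : x' ∉ X) :
    (hL p L (insert x' (X.erase x)) : ℤ)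
      = (hL p L X : ℤ)
        + ((X.filter fun z => z % p ^ L = x % p ^ L).card : ℤ)
        - ((X.filter fun z => z % p ^ L = x' % p ^ L).card : ℤ)
        + ((x' / p ^ L : ℕ) : ℤ) - ((x / p ^ L : ℕ) : ℤ) - 1
        + (if x % p ^ L = x' % p ^ L then 1 else 0) := by
  have hq : 0 < p ^ L := pow_pos hp L
  have hx'e : x' ∉ X.erase x := fun h => hx' (Finset.mem_of_mem_erase h)
  have hXc : 1 ≤ X.card := Finset.card_pos.mpr ⟨x, hx⟩
  have hcard : (insert x' (X.erase x)).card = X.card := by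
    rw [Finset.card_insert_of_notMem hx'e, Finset.card_erase_of_mem hx]; omega
  have hDnat : (∑ z ∈ insert x' (X.erase x), z / p ^ L) + x / p ^ L
      = (∑ z ∈ X, z / p ^ L) + x' / p ^ L := by
    rw [Finset.sum_insert hx'e, ← Finset.sum_erase_add X _ hx]; ring
  have ha : x % p ^ L < p ^ L := Nat.mod_lt _ hq
  have hb : x' % p ^ L < p ^ L := Nat.mod_lt _ hq
  have hUcomp : ∑ R ∈ Finset.range (p ^ L),
        (((insert x' (X.erase x)).filter fun z => z % p ^ L = R).card : ℤ) ^ 2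
      = (∑ R ∈ Finset.range (p ^ L), ((X.filter fun z => z % p ^ L = R).card : ℤ) ^ 2)
        + 2 * ((X.filter fun z => z % p ^ L = x' % p ^ L).card : ℤ)
        - 2 * ((X.filter fun z => z % p ^ L = x % p ^ L).card : ℤ) + 2
        - 2 * (if x % p ^ L = x' % p ^ L then 1 else 0) := by
    have hpt : ∀ R ∈ Finset.range (p ^ L),
        (((insert x' (X.erase x)).filter fun z => z % p ^ L = R).card : ℤ) ^ 2
        = ((X.filter fun z => z % p ^ L = R).card : ℤ) ^ 2
          + 2 * (if x' % p ^ L = R then ((X.filter fun z => z % p ^ L = R).card : ℤ) else 0)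
          - 2 * (if x % p ^ L = R then ((X.filter fun z => z % p ^ L = R).card : ℤ) else 0)
          + (if x' % p ^ L = R then 1 else 0) + (if x % p ^ L = R then 1 else 0)
          - 2 * (if x % p ^ L = R then (if x' % p ^ L = R then (1:ℤ) else 0) else 0) := by
      intro R _
      rw [cntY (p ^ L) X x x' hx hx' R]
      by_cases h1 : x % p ^ L = R <;> by_cases h2 : x' % p ^ L = R <;>
        simp [h1, h2] <;> ring
    rw [Finset.sum_congr rfl hpt]
    simp only [Finset.sum_sub_distrib, Finset.sum_add_distrib, ← Finset.mul_sum,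
      Finset.sum_ite_eq, Finset.mem_range, ha, hb, if_pos]
    have e1 : ∀ c : ℤ, (if x' % p ^ L = x % p ^ L then c else 0)
        = (if x % p ^ L = x' % p ^ L then c else 0) := by
      intro c
      by_cases h : x % p ^ L = x' % p ^ L
      · rw [if_pos h, if_pos h.symm]
      · rw [if_neg h, if_neg (fun hh => h hh.symm)]
    rw [e1]
    have e2 : (X.filter fun z => z % p ^ L = x % p ^ L)
        = (X.filter fun y => y % p ^ L = x % p ^ L) := rfl
    ring
  have h1 := hL_eq p L X
  have h2 := hL_eq p L (insert x' (X.erase x))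
  have h3 := twoT (p ^ L) X
  have h4 := twoT (p ^ L) (insert x' (X.erase x))
  rw [fiber (p ^ L) hq X] at h3
  rw [fiber (p ^ L) hq (insert x' (X.erase x))] at h4
  have h1' := congrArg (fun n : ℕ => (n : ℤ)) h1
  have h2' := congrArg (fun n : ℕ => (n : ℤ)) h2
  have h3' := congrArg (fun n : ℕ => (n : ℤ)) h3
  have h4' := congrArg (fun n : ℕ => (n : ℤ)) h4
  have hD' := congrArg (fun n : ℕ => (n : ℤ)) hDnat
  have hc' := congrArg (fun n : ℕ => (n : ℤ)) hcard
  push_cast at h1' h2' h3' h4' hD' hc' ⊢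
  linarith [hUcomp, h1', h2', h3', h4', hD', hc']


private lemma digits_iff (p n m : ℕ) : (∀ j < m, n / p ^ j % p = 0) ↔ n % p ^ m = 0 := by
  induction m with
  | zero => simp [Nat.mod_one]
  | succ m ih =>
    constructor
    · intro h
      have h1 : p ^ m ∣ n := Nat.dvd_of_mod_eq_zero (ih.mp fun j hj => h j (by omega))
      have h2 : p ∣ n / p ^ m := Nat.dvd_of_mod_eq_zero (h m (by omega))
      have h3 : p ^ m * p ∣ n := (Nat.dvd_div_iff_mul_dvd h1).mp h2
      rw [← pow_succ] at h3
      exact Nat.mod_eq_zero_of_dvd h3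
    · intro h j hj
      have hd : p ^ (j + 1) ∣ n :=
        dvd_trans (pow_dvd_pow p (by omega)) (Nat.dvd_of_mod_eq_zero h)
      have h1 : p ^ j ∣ n := dvd_trans (pow_dvd_pow p (by omega)) hd
      have h2 : p ^ j * p ∣ n := by rw [← pow_succ]; exact hd
      exact Nat.mod_eq_zero_of_dvd ((Nat.dvd_div_iff_mul_dvd h1).mpr h2)

private lemma div_sub_pow (p H L x : ℕ) (hp : 0 < p) (hLH : L ≤ H) (hx : p ^ H ≤ x) :
    (x - p ^ H) / p ^ L + p ^ (H - L) = x / p ^ L := by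
  have hpow : p ^ H = p ^ L * p ^ (H - L) := by rw [← pow_add]; congr 1; omega
  have h1 : (x - p ^ L * p ^ (H - L)) / p ^ L = x / p ^ L - p ^ (H - L) :=
    Nat.sub_mul_div x (p ^ L) (p ^ (H - L))
  have h2 : p ^ (H - L) ≤ x / p ^ L := by
    rw [Nat.le_div_iff_mul_le (pow_pos hp L)]
    calc p ^ (H - L) * p ^ L = p ^ H := by rw [mul_comm, ← hpow]
    _ ≤ x := hx
  rw [hpow] at *
  omega

private lemma div_sub_pow2 (p H L x : ℕ) (hp : 1 < p) (hLH : H < L) (hx : p ^ H ≤ x) :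
    (((x - p ^ H) / p ^ L : ℕ) : ℤ)
      = ((x / p ^ L : ℕ) : ℤ) - (if x % p ^ L < p ^ H then 1 else 0) := by
  have hq : 0 < p ^ L := pow_pos (by omega) L
  have hPH : p ^ H < p ^ L := Nat.pow_lt_pow_right hp hLH
  have e1 : p ^ L * (x / p ^ L) + x % p ^ L = x := Nat.div_add_mod x (p ^ L)
  have hrlt : x % p ^ L < p ^ L := Nat.mod_lt _ hq
  by_cases hr : x % p ^ L < p ^ H
  · have hqx : p ^ L ≤ x := by
      by_contra hc
      push_neg at hc
      have hmx : x % p ^ L = x := Nat.mod_eq_of_lt hc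
      generalize x % p ^ L = r at *
      omega
    have hA1 : 1 ≤ x / p ^ L := (Nat.one_le_div_iff hq).mpr hqx
    have hqa : p ^ L * (x / p ^ L) = p ^ L * (x / p ^ L - 1) + p ^ L := by
      have h0 : x / p ^ L - 1 + 1 = x / p ^ L := by omega
      calc p ^ L * (x / p ^ L) = p ^ L * ((x / p ^ L - 1) + 1) := by rw [h0]
      _ = p ^ L * (x / p ^ L - 1) + p ^ L := by ring
    have e2 : x - p ^ H = p ^ L * (x / p ^ L - 1) + (p ^ L + x % p ^ L - p ^ H) := by
      generalize x / p ^ L = A at *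
      generalize x % p ^ L = r at *
      generalize p ^ L * A = f at *
      omega
    rw [if_pos hr, e2, Nat.mul_add_div hq,
      Nat.div_eq_of_lt (show p ^ L + x % p ^ L - p ^ H < p ^ L by
        generalize x % p ^ L = r at *; omega), Nat.add_zero,
      Nat.cast_sub hA1]
    norm_num
  · have e2 : x - p ^ H = p ^ L * (x / p ^ L) + (x % p ^ L - p ^ H) := by
      generalize x / p ^ L = A at *
      generalize x % p ^ L = r at *
      generalize p ^ L * A = f at *
      omega
    rw [if_neg hr, e2, Nat.mul_add_div hq,
      Nat.div_eq_of_lt (show x % p ^ L - p ^ H < p ^ L by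
        generalize x % p ^ L = r at *; omega), Nat.add_zero]
    norm_num

private lemma delta_iff (p H L x : ℕ) (hp : 1 < p) (hHL : H < L) :
    (∀ K ∈ Finset.Ico H L, digit p K x = 0) ↔ x % p ^ L < p ^ H := by
  have hq : 0 < p ^ H := pow_pos (by omega) H
  have hsplit : p ^ L = p ^ H * p ^ (L - H) := by rw [← pow_add]; congr 1; omega
  constructor
  · intro h
    have key : ∀ j < L - H, x / p ^ H / p ^ j % p = 0 := by
      intro j hj
      have hdd : x / p ^ H / p ^ j = x / p ^ (H + j) := by
        rw [Nat.div_div_eq_div_mul, ← pow_add]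
      rw [hdd]
      exact h (H + j) (Finset.mem_Ico.mpr ⟨by omega, by omega⟩)
    have h0 : x / p ^ H % p ^ (L - H) = 0 := (digits_iff p _ _).mp key
    have h1 : x % p ^ L / p ^ H = 0 := by
      rw [hsplit, Nat.mod_mul_right_div_self]; exact h0
    exact (Nat.div_eq_zero_iff.mp h1).resolve_left (by omega)
  · intro h K hK
    rw [Finset.mem_Ico] at hK
    have h0 : x % p ^ L / p ^ H = 0 := Nat.div_eq_zero_iff.mpr (Or.inr h)
    rw [hsplit, Nat.mod_mul_right_div_self] at h0
    have key := (digits_iff p (x / p ^ H) (L - H)).mpr h0 (K - H) (by omega)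
    rw [Nat.div_div_eq_div_mul, ← pow_add] at key
    have hKH : H + (K - H) = K := by omega
    rw [hKH] at key
    exact key

theorem stmt13 (p H : ℕ) (hp : 1 < p) (X : Finset ℕ) (x : ℕ) (hx : x ∈ X)
    (hxg : p ^ H ≤ x) (hnot : x - p ^ H ∉ X)
    (Y : Finset ℕ) (hY : Y = insert (x - p ^ H) (X.erase x)) :
    (∀ L ≤ H, (hL p L Y : ℤ) = (hL p L X : ℤ) - p ^ (H - L)) ∧
      (∀ L, H + 1 ≤ L →
        (hL p L Y : ℤ) = (hL p L X : ℤ)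
          + ((X.filter fun z => z % p ^ L = x % p ^ L).card : ℤ)
          - ((X.filter fun z => z % p ^ L = (x - p ^ H) % p ^ L).card : ℤ)
          - (if ∀ K ∈ Finset.Ico H L, digit p K x = 0 then 1 else 0) - 1) := by
  have hp0 : 0 < p := by omega
  have hph : 0 < p ^ H := pow_pos hp0 H
  constructor
  · intro L hLH
    have key := master p L hp0 X x (x - p ^ H) hx hnot
    rw [← hY] at key
    have hmod : (x - p ^ H) % p ^ L = x % p ^ L := by
      have hdvd : p ^ L ∣ x - (x - p ^ H) := by
        have h0 : x - (x - p ^ H) = p ^ H := by omega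
        rw [h0]; exact pow_dvd_pow p hLH
      exact ((Nat.modEq_iff_dvd' (by omega)).mpr hdvd).symm.symm
    rw [hmod] at key
    rw [key, if_pos rfl]
    have hdiv := congrArg (fun n : ℕ => (n : ℤ)) (div_sub_pow p H L x hp0 hLH hxg)
    simp only [Nat.cast_add, Nat.cast_pow] at hdiv
    linarith [hdiv]
  · intro L hLH
    have key := master p L hp0 X x (x - p ^ H) hx hnot
    rw [← hY] at key
    have hPH : p ^ H < p ^ L := Nat.pow_lt_pow_right hp (by omega)
    have hne : ¬ (x % p ^ L = (x - p ^ H) % p ^ L) := by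
      intro h
      have hdvd : p ^ L ∣ x - (x - p ^ H) := (Nat.modEq_iff_dvd' (by omega)).mp h.symm
      have h0 : x - (x - p ^ H) = p ^ H := by omega
      rw [h0] at hdvd
      exact absurd (Nat.le_of_dvd hph hdvd) (by omega)
    have hdiv := div_sub_pow2 p H L x hp (by omega) hxg
    have e : (if ∀ K ∈ Finset.Ico H L, digit p K x = 0 then (1:ℤ) else 0)
        = (if x % p ^ L < p ^ H then 1 else 0) :=
      if_congr (delta_iff p H L x hp (by omega)) rfl rfl
    rw [key, if_neg hne, hdiv, e]
    ring
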